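/- Let U ∈ U(N) and V ∈ U(N), and consider G'(U) = (1/N²)|Tr(V†U)|². If W = V†U satisfies Re[conj(Tr W)·Tr(WA)] = 0 for all A ∈ su(N), then, letting γ = Tr(W), the matrix conj(γ)·W equals iα·I + R for some real α and Hermitian R whose eigenvalues all have the same absolute value. -/

import Mathlib

open Matrix

lemma aux_trace_zero {n : ℕ} (X : Matrix (Fin n) (Fin n) ℂ)
    (h : Matrix.trace (Xᴴ * X) = 0) : X = 0 := by
  have key : Matrix.trace (Xᴴ * X) = ((∑ j, ∑ i, Complex.normSq (X i j) : ℝ) : ℂ) := by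
    push_cast
    simp [Matrix.trace, Matrix.mul_apply, Matrix.diag, Matrix.conjTranspose_apply,
      Complex.normSq_eq_conj_mul_self]
  rw [key] at h
  have h' : (∑ j, ∑ i, Complex.normSq (X i j) : ℝ) = 0 := by exact_mod_cast h
  ext i j
  have hij : Complex.normSq (X i j) = 0 := by
    have h1 := (Finset.sum_eq_zero_iff_of_nonneg (fun j _ => Finset.sum_nonneg
      (fun i _ => Complex.normSq_nonneg _))).mp h' j (Finset.mem_univ _)
    exact (Finset.sum_eq_zero_iff_of_nonneg (fun i _ => Complex.normSq_nonneg _)).mp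
      h1 i (Finset.mem_univ _)
  simpa using Complex.normSq_eq_zero.mp hij

lemma aux_D0 {n : ℕ} (D : Matrix (Fin n) (Fin n) ℂ) (τ : ℂ)
    (hskew : (D - τ • 1)ᴴ = -(D - τ • 1))
    (htr0 : Matrix.trace (D - τ • (1 : Matrix (Fin n) (Fin n) ℂ)) = 0)
    (hkey : Matrix.trace (D * (D - τ • 1)) = 0) :
    D = τ • 1 := by
  have e1 : (D - τ • (1 : Matrix (Fin n) (Fin n) ℂ)) * (D - τ • 1)
      = D * (D - τ • 1) - τ • (D - τ • 1) := by
    rw [Matrix.sub_mul, Matrix.smul_mul, Matrix.one_mul]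
  have h1 : Matrix.trace ((D - τ • (1 : Matrix (Fin n) (Fin n) ℂ)) * (D - τ • 1)) = 0 := by
    rw [e1, Matrix.trace_sub, hkey, Matrix.trace_smul, htr0, smul_zero, sub_zero]
  have h2 : Matrix.trace ((D - τ • (1 : Matrix (Fin n) (Fin n) ℂ))ᴴ * (D - τ • 1)) = 0 := by
    rw [hskew, Matrix.neg_mul, Matrix.trace_neg, h1, neg_zero]
  have := aux_trace_zero _ h2
  rwa [sub_eq_zero] at this

lemma aux_Rsq {n : ℕ} (P : Matrix (Fin n) (Fin n) ℂ) (c g : ℂ)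
    (hP : Pᴴ * P = g • 1) (hD : P - Pᴴ = (2 * c) • 1) :
    (P - c • 1) * (P - c • 1) = (g + c ^ 2) • 1 := by
  have hP' : P = (2 * c) • (1 : Matrix (Fin n) (Fin n) ℂ) + Pᴴ := sub_eq_iff_eq_add.mp hD
  have hPe : P - c • (1 : Matrix (Fin n) (Fin n) ℂ) = Pᴴ + c • 1 := by
    nth_rewrite 1 [hP']
    module
  nth_rewrite 1 [hPe]
  have h3 : c • P - c • Pᴴ = (2 * c ^ 2) • (1 : Matrix (Fin n) (Fin n) ℂ) := by
    rw [← smul_sub, hD, smul_smul]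
    congr 1
    ring
  have expand : (Pᴴ + c • (1 : Matrix (Fin n) (Fin n) ℂ)) * (P - c • 1)
      = Pᴴ * P - c • Pᴴ + (c • P - (c * c) • 1) := by
    rw [Matrix.add_mul, Matrix.mul_sub, Matrix.mul_sub, Matrix.mul_smul, Matrix.mul_one,
      Matrix.smul_mul, Matrix.one_mul, Matrix.smul_mul, Matrix.mul_smul, Matrix.mul_one,
      smul_smul]
  rw [expand, hP]
  have h4 : c • P = c • Pᴴ + (2 * c ^ 2) • (1 : Matrix (Fin n) (Fin n) ℂ) :=
    sub_eq_iff_eq_add.mp h3 |>.trans (by abel)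
  rw [h4]
  module

lemma aux_prod {n : ℕ} (R : Matrix (Fin n) (Fin n) ℂ) (μ k : ℂ) (hR : R * R = k • 1) :
    (μ • (1 : Matrix (Fin n) (Fin n) ℂ) - R) * (μ • 1 + R) = (μ ^ 2 - k) • 1 := by
  rw [Matrix.sub_mul, Matrix.mul_add, Matrix.mul_add, Matrix.smul_mul, Matrix.smul_mul,
    Matrix.one_mul, Matrix.one_mul, Matrix.mul_smul, Matrix.mul_one, hR, smul_smul]
  module

/-- If `W = V†U` satisfies the critical point condition
`Re[conj(Tr W)·Tr(WA)] = 0` for all `A ∈ su(N)` of the phase-invariant fidelity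
`G'(U) = |Tr(V†U)|²/N²`, then with `γ = Tr W` the matrix `conj(γ)·W` equals
`iα·I + R` with `α` real and `R` Hermitian with eigenvalues all of the same
absolute value. -/
theorem stmt8 {N : ℕ} (V U : Matrix (Fin N) (Fin N) ℂ)
    (hV : Vᴴ * V = 1) (hU : Uᴴ * U = 1)
    (hcrit : ∀ A : Matrix (Fin N) (Fin N) ℂ, Aᴴ = -A → Matrix.trace A = 0 →
      ((starRingEnd ℂ) (Matrix.trace (Vᴴ * U)) * Matrix.trace ((Vᴴ * U) * A)).re = 0) :
    ∃ (α : ℝ) (R : Matrix (Fin N) (Fin N) ℂ), Rᴴ = R ∧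
      ((starRingEnd ℂ) (Matrix.trace (Vᴴ * U))) • (Vᴴ * U) =
        ((α : ℂ) * Complex.I) • (1 : Matrix (Fin N) (Fin N) ℂ) + R ∧
      ∃ c : ℝ, ∀ μ ∈ spectrum ℂ R, ‖μ‖ = c := by
  rcases Nat.eq_zero_or_pos N with hN | hN
  · subst hN
    refine ⟨0, 0, Subsingleton.elim _ _, Subsingleton.elim _ _, 0, ?_⟩
    intro μ hμ
    rw [spectrum.mem_iff] at hμ
    exact absurd (isUnit_of_subsingleton _) hμ
  have hNne : (N : ℂ) ≠ 0 := Nat.cast_ne_zero.mpr hN.ne'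
  obtain ⟨W, hWdef⟩ : ∃ W' : Matrix (Fin N) (Fin N) ℂ, W' = Vᴴ * U := ⟨_, rfl⟩
  rw [← hWdef] at hcrit ⊢
  have hW : Wᴴ * W = 1 := by
    have hVV : V * Vᴴ = 1 := mul_eq_one_comm.mp hV
    rw [hWdef]
    calc (Vᴴ * U)ᴴ * (Vᴴ * U) = Uᴴ * (V * Vᴴ) * U := by
          simp [Matrix.conjTranspose_mul, Matrix.mul_assoc]
      _ = 1 := by rw [hVV, Matrix.mul_one, hU]
  clear hWdef hV hU
  obtain ⟨γ, hγ⟩ : ∃ γ' : ℂ, γ' = Matrix.trace W := ⟨_, rfl⟩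
  rw [← hγ] at hcrit ⊢
  obtain ⟨M, hM⟩ : ∃ M' : Matrix (Fin N) (Fin N) ℂ, M' = (starRingEnd ℂ) γ • W := ⟨_, rfl⟩
  rw [← hM]
  have hMH : Mᴴ = γ • Wᴴ := by
    rw [hM, Matrix.conjTranspose_smul]
    congr 1
    simp
  have hMHM : Mᴴ * M = (γ * (starRingEnd ℂ) γ) • (1 : Matrix (Fin N) (Fin N) ℂ) := by
    rw [hMH, hM, Matrix.smul_mul, Matrix.mul_smul, hW, smul_smul]
  have hDskew : (M - Mᴴ)ᴴ = -(M - Mᴴ) := by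
    rw [Matrix.conjTranspose_sub, Matrix.conjTranspose_conjTranspose, neg_sub]
  have hDA : ∀ A : Matrix (Fin N) (Fin N) ℂ, Aᴴ = -A → Matrix.trace A = 0 →
      Matrix.trace ((M - Mᴴ) * A) = 0 := by
    intro A hA hAtr
    have h1 : (Matrix.trace (M * A)).re = 0 := by
      rw [hM, Matrix.smul_mul, Matrix.trace_smul]
      simpa using hcrit A hA hAtr
    have hc : (starRingEnd ℂ) (Matrix.trace (Mᴴ * A)) = -Matrix.trace (M * A) := by
      have e1 : Matrix.trace ((Mᴴ * A)ᴴ) = star (Matrix.trace (Mᴴ * A)) :=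
        Matrix.trace_conjTranspose _
      rw [Matrix.conjTranspose_mul, Matrix.conjTranspose_conjTranspose] at e1
      rw [show (starRingEnd ℂ) (Matrix.trace (Mᴴ * A)) = star (Matrix.trace (Mᴴ * A)) from rfl,
        ← e1, Matrix.trace_mul_comm, hA, Matrix.mul_neg, Matrix.trace_neg]
    have h2 : (Matrix.trace (Mᴴ * A)).re = 0 := by
      have h := congrArg Complex.re hc
      rw [Complex.conj_re, Complex.neg_re, h1, neg_zero] at h
      exact h
    have hre : (Matrix.trace ((M - Mᴴ) * A)).re = 0 := by
      rw [Matrix.sub_mul, Matrix.trace_sub, Complex.sub_re, h1, h2, sub_zero]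
    have hreal : star (Matrix.trace ((M - Mᴴ) * A)) = Matrix.trace ((M - Mᴴ) * A) := by
      rw [← Matrix.trace_conjTranspose, Matrix.conjTranspose_mul, hA, hDskew,
        Matrix.neg_mul, Matrix.mul_neg, neg_neg, Matrix.trace_mul_comm]
    have him : (Matrix.trace ((M - Mᴴ) * A)).im = 0 :=
      Complex.conj_eq_iff_im.mp hreal
    exact Complex.ext hre him
  obtain ⟨τ, hτ⟩ : ∃ τ' : ℂ, τ' = Matrix.trace (M - Mᴴ) / N := ⟨_, rfl⟩
  have hDtr : star (Matrix.trace (M - Mᴴ)) = -Matrix.trace (M - Mᴴ) := by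
    rw [← Matrix.trace_conjTranspose, hDskew, Matrix.trace_neg]
  have hτconj : star τ = -τ := by
    rw [hτ, star_div₀, hDtr, star_natCast]
    ring
  have hA₀skew : ((M - Mᴴ) - τ • 1)ᴴ = -((M - Mᴴ) - τ • 1) := by
    rw [Matrix.conjTranspose_sub, Matrix.conjTranspose_smul, Matrix.conjTranspose_one,
      hDskew, hτconj]
    module
  have hA₀tr : Matrix.trace ((M - Mᴴ) - τ • (1 : Matrix (Fin N) (Fin N) ℂ)) = 0 := by
    rw [Matrix.trace_sub, Matrix.trace_smul, Matrix.trace_one, hτ]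
    simp only [Fintype.card_fin, smul_eq_mul]
    field_simp
    ring
  have key := hDA _ hA₀skew hA₀tr
  have hDform : M - Mᴴ = τ • 1 := aux_D0 _ _ hA₀skew hA₀tr key
  have hτre : τ.re = 0 := by
    have h : τ.re = -τ.re := by
      simpa [Complex.star_def] using congrArg Complex.re hτconj
    linarith
  have hτim : τ = (τ.im : ℂ) * Complex.I := by
    apply Complex.ext <;> simp [hτre]
  set α : ℝ := τ.im / 2 with hα
  have hτ2 : τ = 2 * ((α : ℂ) * Complex.I) := by
    rw [hτim, hα]
    push_cast
    ring
  have hDform2 : M - Mᴴ = (2 * ((α : ℂ) * Complex.I)) • 1 := by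
    rw [hDform, hτ2]
  obtain ⟨R, hR⟩ : ∃ R' : Matrix (Fin N) (Fin N) ℂ,
      R' = M - ((α : ℂ) * Complex.I) • 1 := ⟨_, rfl⟩
  have hRH : Rᴴ = Mᴴ + ((α : ℂ) * Complex.I) • 1 := by
    rw [hR, Matrix.conjTranspose_sub, Matrix.conjTranspose_smul, Matrix.conjTranspose_one]
    rw [show star ((α : ℂ) * Complex.I) = -((α : ℂ) * Complex.I) from by
      rw [show star ((α : ℂ) * Complex.I) = (starRingEnd ℂ) ((α : ℂ) * Complex.I) from rfl,
        _root_.map_mul, Complex.conj_I, Complex.conj_ofReal]; ring]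
    module
  have hMe : M = (2 * ((α : ℂ) * Complex.I)) • 1 + Mᴴ := sub_eq_iff_eq_add.mp hDform2
  have hRherm : Rᴴ = R := by
    rw [hRH, hR]
    nth_rewrite 2 [hMe]
    module
  refine ⟨α, R, hRherm, by rw [hR]; module, ?_⟩
  have hsq : R * R = (γ * (starRingEnd ℂ) γ + ((α : ℂ) * Complex.I) ^ 2) • 1 := by
    rw [hR]
    exact aux_Rsq M _ _ hMHM hDform2
  refine ⟨Real.sqrt ‖γ * (starRingEnd ℂ) γ + ((α : ℂ) * Complex.I) ^ 2‖, ?_⟩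
  intro μ hμ
  rw [spectrum.mem_iff, Algebra.algebraMap_eq_smul_one] at hμ
  have hdet : (μ • (1 : Matrix (Fin N) (Fin N) ℂ) - R).det = 0 := by
    by_contra hne
    exact hμ ((Matrix.isUnit_iff_isUnit_det _).mpr (isUnit_iff_ne_zero.mpr hne))
  have hdet2 : (μ ^ 2 - (γ * (starRingEnd ℂ) γ + ((α : ℂ) * Complex.I) ^ 2)) ^ N = 0 := by
    have h := congrArg Matrix.det (aux_prod R μ _ hsq)
    rw [Matrix.det_mul, hdet, zero_mul, Matrix.det_smul, Matrix.det_one, mul_one,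
      Fintype.card_fin] at h
    exact h.symm
  have hμ2 : μ ^ 2 = γ * (starRingEnd ℂ) γ + ((α : ℂ) * Complex.I) ^ 2 :=
    sub_eq_zero.mp ((pow_eq_zero_iff hN.ne').mp hdet2)
  rw [show ‖μ‖ = Real.sqrt (‖μ‖ ^ 2) from
    (Real.sqrt_sq (norm_nonneg μ)).symm, ← norm_pow, hμ2]
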